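/- Let a < b be real numbers and let f : [a,b] → ℝ be twice differentiable, with real constants m and M such that m ≤ f''(x) ≤ M for all x ∈ [a,b]. Then m(b−a)²/96 ≤ (1/(b−a))·∫_a^b f(t) dt − (1/2)·( f((3a+b)/4) + f((a+3b)/4) ) ≤ M(b−a)²/96. -/

import Mathlib

open MeasureTheory intervalIntegral

/-- Midpoint Hermite–Hadamard: for convex continuous `g` on `[u,v]`,
`g((u+v)/2)*(v-u) ≤ ∫ g`. -/
lemma hh_mid {u v : ℝ} (huv : u < v) {g : ℝ → ℝ}
    (hg : ConvexOn ℝ (Set.Icc u v) g) (hgc : ContinuousOn g (Set.Icc u v)) :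
    g ((u + v) / 2) * (v - u) ≤ ∫ t in u..v, g t := by
  have hvu : (0:ℝ) < v - u := by linarith
  have h0 : (volume (Set.Icc u v)) ≠ 0 := by
    rw [Real.volume_Icc]
    simp only [ne_eq, ENNReal.ofReal_eq_zero, not_le]
    linarith
  have ht : (volume (Set.Icc u v)) ≠ ⊤ := by
    rw [Real.volume_Icc]; exact ENNReal.ofReal_ne_top
  have hfs : ∀ᵐ x ∂(volume.restrict (Set.Icc u v)), id x ∈ Set.Icc u v := by
    filter_upwards [ae_restrict_mem measurableSet_Icc] with x hx using hx
  have hfi : IntegrableOn (id : ℝ → ℝ) (Set.Icc u v) volume :=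
    continuous_id.integrableOn_Icc
  have hgi : IntegrableOn (g ∘ (id : ℝ → ℝ)) (Set.Icc u v) volume :=
    hgc.integrableOn_Icc
  have key := hg.map_set_average_le hgc isClosed_Icc h0 ht hfs hfi hgi
  have htoReal : (volume (Set.Icc u v)).toReal = v - u := by
    rw [Real.volume_Icc, ENNReal.toReal_ofReal hvu.le]
  have havg1 : (⨍ x in Set.Icc u v, id x ∂volume) = (u + v) / 2 := by
    rw [setAverage_eq, measureReal_def, htoReal]
    have : (∫ x in Set.Icc u v, id x ∂volume) = ∫ x in u..v, x := by
      rw [intervalIntegral.integral_of_le huv.le, integral_Icc_eq_integral_Ioc]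
      rfl
    rw [this, integral_id, smul_eq_mul]
    field_simp
    ring
  have havg2 : (⨍ x in Set.Icc u v, g (id x) ∂volume)
      = (v - u)⁻¹ * ∫ t in u..v, g t := by
    rw [setAverage_eq, measureReal_def, htoReal]
    have : (∫ x in Set.Icc u v, g x ∂volume) = ∫ t in u..v, g t := by
      rw [intervalIntegral.integral_of_le huv.le, integral_Icc_eq_integral_Ioc]
    simp only [id]
    rw [this, smul_eq_mul]
  rw [havg1, havg2] at key
  calc g ((u + v) / 2) * (v - u) ≤ ((v - u)⁻¹ * ∫ t in u..v, g t) * (v - u) := by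
        exact mul_le_mul_of_nonneg_right key hvu.le
    _ = ∫ t in u..v, g t := by field_simp

/-- Core lower bound. -/
lemma fejer_core (a b : ℝ) (hab : a < b) (f f' f'' : ℝ → ℝ) (m : ℝ)
    (hf' : ∀ x ∈ Set.Icc a b, HasDerivWithinAt f (f' x) (Set.Icc a b) x)
    (hf'' : ∀ x ∈ Set.Icc a b, HasDerivWithinAt f' (f'' x) (Set.Icc a b) x)
    (hm : ∀ x ∈ Set.Icc a b, m ≤ f'' x) :
    m * (b - a) ^ 2 / 96
        ≤ (1 / (b - a)) * (∫ t in a..b, f t)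
            - (1 / 2) * (f ((3 * a + b) / 4) + f ((a + 3 * b) / 4)) := by
  have hba : (0:ℝ) < b - a := by linarith
  set g : ℝ → ℝ := fun x => f x - m / 2 * x ^ 2 with hg_def
  set c : ℝ := (a + b) / 2 with hc_def
  have hfc : ContinuousOn f (Set.Icc a b) :=
    fun x hx => (hf' x hx).continuousWithinAt
  have hgc : ContinuousOn g (Set.Icc a b) :=
    hfc.sub ((continuous_const.mul (continuous_pow 2)).continuousOn)
  -- convexity of g
  have hgconv : ConvexOn ℝ (Set.Icc a b) g := by
    apply convexOn_of_hasDerivWithinAt2_nonneg (f' := fun x => f' x - m * x)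
      (f'' := fun x => f'' x - m) (convex_Icc a b) hgc
    · intro x hx
      have hx' : x ∈ Set.Icc a b := interior_subset hx
      have h1 : HasDerivWithinAt f (f' x) (interior (Set.Icc a b)) x :=
        (hf' x hx').mono interior_subset
      have h2 : HasDerivWithinAt (fun x : ℝ => m / 2 * x ^ 2) (m * x)
          (interior (Set.Icc a b)) x := by
        have := ((hasDerivAt_pow 2 x).const_mul (m / 2)).hasDerivWithinAt
          (s := interior (Set.Icc a b))
        refine this.congr_deriv ?_
        ring
      exact h1.sub h2
    · intro x hx
      have hx' : x ∈ Set.Icc a b := interior_subset hx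
      have h1 : HasDerivWithinAt f' (f'' x) (interior (Set.Icc a b)) x :=
        (hf'' x hx').mono interior_subset
      have h2 : HasDerivWithinAt (fun x : ℝ => m * x) m
          (interior (Set.Icc a b)) x := by
        simpa using ((hasDerivAt_id x).const_mul m).hasDerivWithinAt
          (s := interior (Set.Icc a b))
      exact h1.sub h2
    · intro x hx
      have := hm x (interior_subset hx)
      simp only [sub_nonneg]
      linarith
  -- HH on two halves
  have hac : a < c := by rw [hc_def]; linarith
  have hcb : c < b := by rw [hc_def]; linarith
  have hsub1 : Set.Icc a c ⊆ Set.Icc a b := Set.Icc_subset_Icc le_rfl hcb.le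
  have hsub2 : Set.Icc c b ⊆ Set.Icc a b := Set.Icc_subset_Icc hac.le le_rfl
  have h1 := hh_mid hac (hgconv.subset hsub1 (convex_Icc a c)) (hgc.mono hsub1)
  have h2 := hh_mid hcb (hgconv.subset hsub2 (convex_Icc c b)) (hgc.mono hsub2)
  -- integrability and splitting
  have hgint1 : IntervalIntegrable g volume a c :=
    ((hgc.mono hsub1).intervalIntegrable_of_Icc hac.le)
  have hgint2 : IntervalIntegrable g volume c b :=
    ((hgc.mono hsub2).intervalIntegrable_of_Icc hcb.le)
  have hsplit : (∫ t in a..c, g t) + (∫ t in c..b, g t) = ∫ t in a..b, g t :=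
    intervalIntegral.integral_add_adjacent_intervals hgint1 hgint2
  -- evaluate ∫ g
  have hfint : IntervalIntegrable f volume a b :=
    hfc.intervalIntegrable_of_Icc hab.le
  have hpint : IntervalIntegrable (fun x : ℝ => m / 2 * x ^ 2) volume a b :=
    (intervalIntegrable_pow 2).const_mul _
  have hIg : (∫ t in a..b, g t)
      = (∫ t in a..b, f t) - m / 2 * ((b ^ 3 - a ^ 3) / 3) := by
    rw [hg_def]
    rw [intervalIntegral.integral_sub hfint hpint,
      intervalIntegral.integral_const_mul, integral_pow]
    norm_num
  -- midpoints
  have hq1 : (a + c) / 2 = (3 * a + b) / 4 := by rw [hc_def]; ring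
  have hq2 : (c + b) / 2 = (a + 3 * b) / 4 := by rw [hc_def]; ring
  rw [hq1] at h1
  rw [hq2] at h2
  have hca : c - a = (b - a) / 2 := by rw [hc_def]; ring
  have hbc : b - c = (b - a) / 2 := by rw [hc_def]; ring
  rw [hca] at h1
  rw [hbc] at h2
  have hgq1 : g ((3 * a + b) / 4) = f ((3 * a + b) / 4) - m / 2 * ((3 * a + b) / 4) ^ 2 := rfl
  have hgq2 : g ((a + 3 * b) / 4) = f ((a + 3 * b) / 4) - m / 2 * ((a + 3 * b) / 4) ^ 2 := rfl
  rw [hgq1] at h1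
  rw [hgq2] at h2
  have key : (m * (b - a) ^ 2 / 96 + 1 / 2 * (f ((3 * a + b) / 4) + f ((a + 3 * b) / 4))) * (b - a)
      ≤ ∫ t in a..b, f t := by
    calc (m * (b - a) ^ 2 / 96 + 1 / 2 * (f ((3 * a + b) / 4) + f ((a + 3 * b) / 4))) * (b - a)
        = (f ((3 * a + b) / 4) - m / 2 * ((3 * a + b) / 4) ^ 2) * ((b - a) / 2)
          + (f ((a + 3 * b) / 4) - m / 2 * ((a + 3 * b) / 4) ^ 2) * ((b - a) / 2)
          + m / 2 * ((b ^ 3 - a ^ 3) / 3) := by ring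
      _ ≤ ∫ t in a..b, f t := by linarith
  have h3 := (le_div_iff₀ hba).mpr key
  have e : (1 / (b - a)) * (∫ t in a..b, f t) = (∫ t in a..b, f t) / (b - a) := by ring
  linarith

/-- Remark: for twice differentiable `f` with `m ≤ f'' ≤ M` on `[a,b]`,
`m(b−a)²/96 ≤ (1/(b−a))·∫_a^b f − (1/2)·(f((3a+b)/4) + f((a+3b)/4)) ≤ M(b−a)²/96`. -/
theorem fejer_stmt_7 (a b : ℝ) (hab : a < b) (f f' f'' : ℝ → ℝ) (m M : ℝ)
    (hf' : ∀ x ∈ Set.Icc a b, HasDerivWithinAt f (f' x) (Set.Icc a b) x)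
    (hf'' : ∀ x ∈ Set.Icc a b, HasDerivWithinAt f' (f'' x) (Set.Icc a b) x)
    (hm : ∀ x ∈ Set.Icc a b, m ≤ f'' x)
    (hM : ∀ x ∈ Set.Icc a b, f'' x ≤ M) :
    m * (b - a) ^ 2 / 96
        ≤ (1 / (b - a)) * (∫ t in a..b, f t)
            - (1 / 2) * (f ((3 * a + b) / 4) + f ((a + 3 * b) / 4)) ∧
    (1 / (b - a)) * (∫ t in a..b, f t)
        - (1 / 2) * (f ((3 * a + b) / 4) + f ((a + 3 * b) / 4))
        ≤ M * (b - a) ^ 2 / 96 := by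
  constructor
  · exact fejer_core a b hab f f' f'' m hf' hf'' hm
  · have := fejer_core a b hab (fun x => -f x) (fun x => -f' x) (fun x => -f'' x) (-M)
      (fun x hx => (hf' x hx).neg) (fun x hx => (hf'' x hx).neg)
      (fun x hx => neg_le_neg (hM x hx))
    rw [intervalIntegral.integral_neg] at this
    linarith
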